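/- Assume ℙ(S_F) = 1. Then the topological support of v_ℙ equals the closure of the graph of the coding map restricted to the support of ℙ: supp v_ℙ = cl{(ϑ, ρ(ϑ)) : ϑ ∈ S_F ∩ supp ℙ}. -/

import Mathlib

open Set Function Filter Topology MeasureTheory

noncomputable section

/-- The shift map on two-sided sequences. -/
def shiftMap {k : ℕ} (θ : ℤ → Fin k) : ℤ → Fin k := fun i => θ (i + 1)

/-- The step skew product `F(θ, x) = (σ θ, f_{θ₀} x)`. -/
def skewProd {k : ℕ} {M : Type*} (f : Fin k → M → M) :
    (ℤ → Fin k) × M → (ℤ → Fin k) × M :=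
  fun p => (shiftMap p.1, f (p.1 0) p.2)

/-- Backward composition `f_{θ₋₁} ∘ ⋯ ∘ f_{θ₋ₙ}`. -/
def bcomp {k : ℕ} {M : Type*} (f : Fin k → M → M) (θ : ℤ → Fin k) : ℕ → M → M
  | 0 => id
  | n + 1 => bcomp f θ n ∘ f (θ (-((n : ℤ) + 1)))

/-- The spine `I_θ = ⋂_{n ≥ 1} f_{θ₋₁} ∘ ⋯ ∘ f_{θ₋ₙ}(M)`. -/
def spine {k : ℕ} {M : Type*} (f : Fin k → M → M) (θ : ℤ → Fin k) : Set M :=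
  ⋂ n : ℕ, bcomp f θ (n + 1) '' Set.univ

/-- The set of weakly hyperbolic sequences: those `θ` whose spine is a singleton. -/
def weakHyp {k : ℕ} {M : Type*} (f : Fin k → M → M) : Set (ℤ → Fin k) :=
  {θ | ∃ x : M, spine f θ = {x}}

/-- The ω-limit set of a point `z` under iteration of `F`: limits of subsequences
`F^{n_j}(z)` with `n_j → ∞`. -/
def omegaLim {α : Type*} [TopologicalSpace α] (F : α → α) (z : α) : Set α :=
  {w | ∃ φ : ℕ → ℕ, StrictMono φ ∧ Tendsto (fun j => F^[φ j] z) atTop (𝓝 w)}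


/-- The topological support of a measure: points all of whose open neighbourhoods have
positive measure. -/
def msupport {X : Type*} [TopologicalSpace X] [MeasurableSpace X] (μ : Measure X) :
    Set X :=
  {z | ∀ U : Set X, IsOpen U → z ∈ U → 0 < μ U}

/-! ### Auxiliary lemmas -/

open ENNReal

section Aux

set_option linter.unusedSectionVars false

variable {k : ℕ} {M : Type*} [MetricSpace M] [CompactSpace M] [Nonempty M]
  {f : Fin k → M → M}

lemma bcomp_cont (hf : ∀ i, Continuous (f i)) (θ : ℤ → Fin k) (n : ℕ) :
    Continuous (bcomp f θ n) := by
  induction n with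
  | zero => exact continuous_id
  | succ n ih => exact ih.comp (hf _)

lemma bcomp_antitone (θ : ℤ → Fin k) (n : ℕ) :
    bcomp f θ (n + 2) '' univ ⊆ bcomp f θ (n + 1) '' univ := by
  have : bcomp f θ (n + 2) = bcomp f θ (n + 1) ∘ f (θ (-(((n+1 : ℕ) : ℤ) + 1))) := rfl
  rw [this, image_comp]
  exact image_mono (subset_univ _)

lemma bcomp_congr {θ θ' : ℤ → Fin k} (n : ℕ)
    (h : ∀ j : ℕ, j < n → θ' (-((j : ℤ) + 1)) = θ (-((j : ℤ) + 1))) :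
    bcomp f θ' n = bcomp f θ n := by
  induction n with
  | zero => rfl
  | succ n ih =>
    show bcomp f θ' n ∘ f (θ' (-((n : ℤ) + 1))) = bcomp f θ n ∘ f (θ (-((n : ℤ) + 1)))
    rw [ih (fun j hj => h j (Nat.lt_succ_of_lt hj)), h n (Nat.lt_succ_self n)]

lemma Kcompact (hf : ∀ i, Continuous (f i)) (θ : ℤ → Fin k) (n : ℕ) :
    IsCompact (bcomp f θ (n + 1) '' univ) :=
  isCompact_univ.image (bcomp_cont hf θ (n + 1))

lemma spine_nonempty (hf : ∀ i, Continuous (f i)) (θ : ℤ → Fin k) :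
    (spine f θ).Nonempty := by
  apply IsCompact.nonempty_iInter_of_sequence_nonempty_isCompact_isClosed
  · exact fun n => bcomp_antitone θ n
  · exact fun n => (univ_nonempty).image _
  · exact Kcompact hf θ 0
  · exact fun n => (Kcompact hf θ n).isClosed

lemma shrink (hf : ∀ i, Continuous (f i)) {θ : ℤ → Fin k} {x : M}
    (hsp : spine f θ = {x}) {V : Set M} (hV : IsOpen V) (hx : x ∈ V) :
    ∃ n : ℕ, bcomp f θ (n + 1) '' univ ⊆ V := by
  by_contra h
  push_neg at h
  have hne : ∀ n : ℕ, ((bcomp f θ (n + 1) '' univ) ∩ Vᶜ).Nonempty := by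
    intro n
    rcases not_subset.1 (h n) with ⟨y, hy, hy'⟩
    exact ⟨y, hy, hy'⟩
  have : (⋂ n : ℕ, (bcomp f θ (n + 1) '' univ) ∩ Vᶜ).Nonempty := by
    apply IsCompact.nonempty_iInter_of_sequence_nonempty_isCompact_isClosed
    · exact fun n => inter_subset_inter_left _ (bcomp_antitone θ n)
    · exact hne
    · exact (Kcompact hf θ 0).inter_right hV.isClosed_compl
    · exact fun n => ((Kcompact hf θ n).isClosed).inter hV.isClosed_compl
  rw [← iInter_inter, ← spine, hsp] at this
  rcases this with ⟨y, hy1, hy2⟩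
  rw [mem_singleton_iff] at hy1
  exact hy2 (hy1 ▸ hx)

/-- The diameter of the `n`-th backward image, as a function of the sequence. -/
def dK (f : Fin k → M → M) (n : ℕ) (θ : ℤ → Fin k) : ℝ≥0∞ :=
  EMetric.diam (bcomp f θ (n + 1) '' univ)

lemma cyl_open (θ : ℤ → Fin k) (n : ℕ) :
    IsOpen {θ' : ℤ → Fin k | ∀ j : ℕ, j < n → θ' (-((j : ℤ) + 1)) = θ (-((j : ℤ) + 1))} := by
  have : {θ' : ℤ → Fin k | ∀ j : ℕ, j < n → θ' (-((j : ℤ) + 1)) = θ (-((j : ℤ) + 1))}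
      = ⋂ j ∈ Finset.range n,
          (fun θ' : ℤ → Fin k => θ' (-((j : ℤ) + 1))) ⁻¹' {θ (-((j : ℤ) + 1))} := by
    ext θ'
    simp [Finset.mem_range]
  rw [this]
  exact isOpen_biInter_finset fun j _ =>
    (continuous_apply _).isOpen_preimage _ (isOpen_discrete _)

lemma dK_measurable (n : ℕ) : Measurable (dK f n) := by
  apply (IsLocallyConstant.continuous ?_).measurable
  rw [IsLocallyConstant.iff_exists_open]
  intro θ
  refine ⟨_, cyl_open θ (n + 1), fun j _ => rfl, fun θ' hθ' => ?_⟩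
  unfold dK
  rw [bcomp_congr (n + 1) hθ']

lemma weakHyp_eq (hf : ∀ i, Continuous (f i)) :
    weakHyp f = (fun θ => ⨅ n : ℕ, dK f n θ) ⁻¹' {0} := by
  ext θ
  simp only [mem_preimage, mem_singleton_iff]
  constructor
  · rintro ⟨x, hx⟩
    refine le_antisymm (ENNReal.le_of_forall_pos_le_add fun ε hε _ => ?_) zero_le
    have hr : (0 : ℝ≥0∞) < (ε : ℝ≥0∞) / 2 := by
      simp [ENNReal.div_pos_iff, hε.ne']
    obtain ⟨n, hn⟩ := shrink hf hx EMetric.isOpen_ball (EMetric.mem_ball_self hr)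
    calc ⨅ m : ℕ, dK f m θ ≤ dK f n θ := iInf_le _ n
      _ ≤ EMetric.diam (Metric.eball x ((ε : ℝ≥0∞) / 2)) := EMetric.diam_mono hn
      _ ≤ 2 * ((ε : ℝ≥0∞) / 2) := EMetric.diam_ball
      _ = (ε : ℝ≥0∞) := ENNReal.mul_div_cancel (by norm_num) (by norm_num)
      _ = 0 + ε := (zero_add _).symm
  · intro h
    have hsub : (spine f θ).Subsingleton := by
      rw [← EMetric.diam_eq_zero_iff]
      refine le_antisymm ?_ zero_le
      rw [← h]
      exact le_iInf fun n => EMetric.diam_mono (iInter_subset _ n)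
    obtain ⟨x, hx⟩ := spine_nonempty hf θ
    exact ⟨x, hsub.eq_singleton_of_mem hx⟩

lemma weakHyp_measurable (hf : ∀ i, Continuous (f i)) :
    MeasurableSet (weakHyp f) := by
  rw [weakHyp_eq hf]
  exact (Measurable.iInf fun n => dK_measurable n) (measurableSet_singleton 0)

lemma msupport_conull {X : Type*} [TopologicalSpace X] [SecondCountableTopology X]
    [MeasurableSpace X] (μ : Measure X) : μ (msupport μ)ᶜ = 0 := by
  obtain ⟨T, hTc, hTS, hT⟩ := TopologicalSpace.isOpen_sUnion_countable
    {U : Set X | IsOpen U ∧ μ U = 0} (fun s hs => hs.1)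
  have h1 : (msupport μ)ᶜ ⊆ ⋃₀ T := by
    rw [hT]
    intro z hz
    simp only [msupport, mem_compl_iff, mem_setOf_eq, not_forall] at hz
    obtain ⟨U, hU, hzU, hpos⟩ := hz
    exact ⟨U, ⟨hU, by simpa using hpos⟩, hzU⟩
  refine measure_mono_null h1 ?_
  exact (measure_sUnion_null_iff hTc).2 fun s hs => (hTS hs).2

lemma msupport_closed {X : Type*} [TopologicalSpace X] [MeasurableSpace X] (μ : Measure X) :
    IsClosed (msupport μ) := by
  rw [← isOpen_compl_iff, isOpen_iff_forall_mem_open]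
  intro z hz
  simp only [msupport, mem_compl_iff, mem_setOf_eq, not_forall] at hz
  obtain ⟨U, hU, hzU, hpos⟩ := hz
  refine ⟨U, fun y hy => ?_, hU, hzU⟩
  simp only [msupport, mem_compl_iff, mem_setOf_eq, not_forall]
  exact ⟨U, hU, hy, hpos⟩

end Aux

/-- If `ℙ(S_F) = 1`, the topological support of `v_ℙ = ρ̂_* ℙ` equals the closure of the
graph of the coding map restricted to the support of `ℙ`. -/
theorem support_attracting_measure
    {k : ℕ} (hk : 1 ≤ k) {M : Type*} [MetricSpace M] [CompactSpace M] [Nonempty M]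
    [MeasurableSpace M] [BorelSpace M]
    (f : Fin k → M → M) (hf : ∀ i, Continuous (f i))
    (ℙ : Measure (ℤ → Fin k)) [IsProbabilityMeasure ℙ]
    (hinv : Measure.map shiftMap ℙ = ℙ)
    (hS : ℙ (weakHyp f) = 1)
    (ρ : (ℤ → Fin k) → M) (hρ : ∀ θ ∈ weakHyp f, spine f θ = {ρ θ})
    (hρm : AEMeasurable (fun θ => (θ, ρ θ) : (ℤ → Fin k) → (ℤ → Fin k) × M) ℙ) :
    msupport (Measure.map (fun θ => (θ, ρ θ)) ℙ) =
      closure ((fun θ => (θ, ρ θ)) '' (weakHyp f ∩ msupport ℙ)) := by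
  set ρh : (ℤ → Fin k) → (ℤ → Fin k) × M := fun θ => (θ, ρ θ) with hρhdef
  set G : Set ((ℤ → Fin k) × M) := ρh '' (weakHyp f ∩ msupport ℙ) with hGdef
  set ν : Measure ((ℤ → Fin k) × M) := Measure.map ρh ℙ with hνdef
  have hWm : MeasurableSet (weakHyp f) := weakHyp_measurable hf
  have hWc : ℙ (weakHyp f)ᶜ = 0 := (prob_compl_eq_zero_iff hWm).2 hS
  have hSuppc : ℙ (msupport ℙ)ᶜ = 0 := msupport_conull ℙ
  have hmap : ∀ U : Set ((ℤ → Fin k) × M), IsOpen U → ν U = ℙ (ρh ⁻¹' U) := fun U hU =>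
    Measure.map_apply_of_aemeasurable hρm hU.measurableSet
  apply Subset.antisymm
  · -- support of ν is contained in the closure of the graph
    intro z hz
    by_contra hzc
    have hUopen : IsOpen (closure G)ᶜ := isClosed_closure.isOpen_compl
    have hpos : 0 < ν (closure G)ᶜ := hz _ hUopen hzc
    rw [hmap _ hUopen] at hpos
    have hsub : ρh ⁻¹' (closure G)ᶜ ⊆ (weakHyp f)ᶜ ∪ (msupport ℙ)ᶜ := by
      intro θ hθ
      by_contra hcon
      simp only [mem_union, mem_compl_iff, not_or, not_not] at hcon
      exact hθ (subset_closure (mem_image_of_mem _ ⟨hcon.1, hcon.2⟩))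
    have hz0 : ℙ (ρh ⁻¹' (closure G)ᶜ) = 0 :=
      measure_mono_null hsub (measure_union_null hWc hSuppc)
    exact hpos.ne' hz0
  · rw [IsClosed.closure_subset_iff (msupport_closed ν)]
    rintro _ ⟨θ, ⟨hθW, hθS⟩, rfl⟩
    intro U hU hzU
    rw [hmap _ hU]
    rw [isOpen_prod_iff] at hU
    obtain ⟨W, V, hW, hV, hθ1, hθ2, hWV⟩ := hU θ (ρ θ) hzU
    obtain ⟨n, hn⟩ := shrink hf (hρ θ hθW) hV hθ2
    set C := W ∩ {θ' : ℤ → Fin k |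
      ∀ j : ℕ, j < n + 1 → θ' (-((j : ℤ) + 1)) = θ (-((j : ℤ) + 1))} with hCdef
    have hCopen : IsOpen C := hW.inter (cyl_open θ (n + 1))
    have hCθ : θ ∈ C := ⟨hθ1, fun j _ => rfl⟩
    have hCpos : 0 < ℙ C := hθS C hCopen hCθ
    have hsub : C ∩ weakHyp f ⊆ ρh ⁻¹' U := by
      rintro θ' ⟨⟨hθ'W, hθ'cyl⟩, hθ'wh⟩
      apply hWV
      refine ⟨hθ'W, ?_⟩
      have h1 : ρ θ' ∈ spine f θ' := by rw [hρ θ' hθ'wh]; exact rfl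
      have h2 : spine f θ' ⊆ bcomp f θ' (n + 1) '' univ := iInter_subset _ n
      rw [bcomp_congr (n + 1) hθ'cyl] at h2
      exact hn (h2 h1)
    calc (0 : ℝ≥0∞) < ℙ C := hCpos
      _ = ℙ (C ∩ weakHyp f) := (measure_inter_conull hWc).symm
      _ ≤ ℙ (ρh ⁻¹' U) := measure_mono hsub
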